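/- Let k and k' be integers with 1 ≤ k' ≤ k and let 𝔪 be a real number with k' − 1 < 𝔪 < k'. Then there exists a constant c > 0 depending only on 𝔪, k and k' such that for every real z > 0: ∫_{ℝ^{k'}} ∫_{ℝ^{k−k'}} ( |η'₁|/z + |η''| )^{𝔪−k} e^{−|η'|²/2} dη'' dη' ≤ c · z^{k'−𝔪}, where η'₁ denotes the first coordinate of η' ∈ ℝ^{k'}, |·| is the Euclidean norm, and for k' = k the inner integral over ℝ⁰ is interpreted as evaluation (so the bound reads ∫_{ℝ^{k}} (|η'₁|/z)^{𝔪−k} e^{−|η'|²/2} dη' ≤ c z^{k−𝔪}). -/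

import Mathlib

open MeasureTheory
open scoped ENNReal

private theorem aux1d_gauss {p : ℝ} (hp : -1 < p) :
    Integrable (fun x : ℝ => |x| ^ p * Real.exp (-x ^ 2 / 2)) := by
  have key : IntegrableOn (fun x : ℝ => |x| ^ p * Real.exp (-x ^ 2 / 2)) (Set.Ioi 0) := by
    have h := integrableOn_rpow_mul_exp_neg_mul_sq (b := 1/2) (by norm_num) hp
    refine (h.congr_fun (fun x hx => ?_) measurableSet_Ioi)
    rw [abs_of_pos hx]
    ring_nf
  rw [← integrableOn_univ, ← Set.Iio_union_Ici (a := (0:ℝ)), integrableOn_union,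
    integrableOn_Ici_iff_integrableOn_Ioi]
  refine ⟨?_, key⟩
  have h2 : IntegrableOn ((fun x : ℝ => |x| ^ p * Real.exp (-x ^ 2 / 2)) ∘ Neg.neg)
      (Neg.neg ⁻¹' (Set.Iio (0:ℝ))) := by
    have hpre : (Neg.neg ⁻¹' (Set.Iio (0:ℝ)) : Set ℝ) = Set.Ioi 0 := by
      ext x; simp
    rw [hpre]
    refine key.congr_fun (fun x _ => ?_) measurableSet_Ioi
    simp [Function.comp, abs_neg, neg_sq]
  exact ((Measure.measurePreserving_neg (volume : Measure ℝ)).integrableOn_comp_preimage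
      (Homeomorph.neg ℝ).measurableEmbedding).mp h2

private theorem auxJ_gauss (k' : ℕ) (i₀ : Fin k') {p : ℝ} (hp : -1 < p) :
    ∫⁻ η' : EuclideanSpace ℝ (Fin k'),
      ENNReal.ofReal (|η' i₀| ^ p) * ENNReal.ofReal (Real.exp (-‖η'‖ ^ 2 / 2)) < ∞ := by
  set f : Fin k' → ℝ → ℝ :=
    fun i t => (if i = i₀ then |t| ^ p else 1) * Real.exp (-t ^ 2 / 2) with hf
  have hint : ∀ i, Integrable (f i) := by
    intro i
    by_cases h : i = i₀
    · simpa [hf, h] using aux1d_gauss hp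
    · simp only [hf, if_neg h, one_mul]
      have := integrable_exp_neg_mul_sq (b := 1/2) (by norm_num)
      refine this.congr (Filter.Eventually.of_forall fun x => ?_)
      ring_nf
  have hF : Integrable (fun x : Fin k' → ℝ => ∏ i, f i (x i)) :=
    Integrable.fin_nat_prod hint
  have hFin := hF.lintegral_lt_top
  have e := (EuclideanSpace.volume_preserving_symm_measurableEquiv_toLp (Fin k')).symm
  rw [← e.lintegral_comp_emb (MeasurableEquiv.measurableEmbedding _)]
  refine lt_of_le_of_lt (lintegral_mono fun x => ?_) hFin
  have hcoord : ∀ i, ((MeasurableEquiv.toLp 2 (Fin k' → ℝ)).symm.symm x) i = x i := fun i => rfl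
  have hnorm : ‖((MeasurableEquiv.toLp 2 (Fin k' → ℝ)).symm.symm x : EuclideanSpace ℝ (Fin k'))‖ ^ 2
      = ∑ i, x i ^ 2 := by
    rw [EuclideanSpace.norm_eq]
    rw [Real.sq_sqrt (by positivity)]
    simp [hcoord, sq_abs]
  rw [hcoord, hnorm, ← ENNReal.ofReal_mul (by positivity)]
  have hprod : (∏ i, f i (x i)) = |x i₀| ^ p * Real.exp (-(∑ i, x i ^ 2) / 2) := by
    rw [hf]
    rw [Finset.prod_mul_distrib]
    congr 1
    · simp [Finset.prod_ite_eq']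
    · rw [← Real.exp_sum]
      congr 1
      rw [← Finset.sum_div, ← Finset.sum_neg_distrib]
  rw [hprod]

private theorem auxScale_gauss (n : ℕ) (q : ℝ) (a : ℝ) (ha : 0 < a) :
    ∫⁻ x : EuclideanSpace ℝ (Fin n), ENNReal.ofReal ((a + ‖x‖) ^ q)
      = ENNReal.ofReal (a ^ (q + n)) *
        ∫⁻ x : EuclideanSpace ℝ (Fin n), ENNReal.ofReal ((1 + ‖x‖) ^ q) := by
  set μ := (volume : Measure (EuclideanSpace ℝ (Fin n)))
  set f : EuclideanSpace ℝ (Fin n) → ℝ≥0∞ := fun x => ENNReal.ofReal ((a + ‖x‖) ^ q) with hfdef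
  have hf : Measurable f := by
    apply Measurable.ennreal_ofReal
    fun_prop
  have hd : Module.finrank ℝ (EuclideanSpace ℝ (Fin n)) = n := finrank_euclideanSpace_fin
  have hmap := Measure.map_addHaar_smul μ (r := a) (ne_of_gt ha)
  rw [hd] at hmap
  have han : (0:ℝ) < a ^ n := by positivity
  have h1 : ∫⁻ x, f (a • x) ∂μ = ENNReal.ofReal ((a ^ n)⁻¹) * ∫⁻ x, f x ∂μ := by
    rw [← lintegral_map hf (measurable_const_smul a), hmap, lintegral_smul_measure,
      abs_of_pos (by positivity), smul_eq_mul]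
  have h2 : ∀ x : EuclideanSpace ℝ (Fin n),
      f (a • x) = ENNReal.ofReal (a ^ q) * ENNReal.ofReal ((1 + ‖x‖) ^ q) := by
    intro x
    have hnorm : ‖a • x‖ = a * ‖x‖ := by
      rw [norm_smul, Real.norm_eq_abs, abs_of_pos ha]
    rw [hfdef]
    simp only [hnorm]
    rw [show a + a * ‖x‖ = a * (1 + ‖x‖) by ring,
      Real.mul_rpow ha.le (by positivity), ENNReal.ofReal_mul (by positivity)]
  have h3 : ∫⁻ x, f (a • x) ∂μ
      = ENNReal.ofReal (a ^ q) * ∫⁻ x, ENNReal.ofReal ((1 + ‖x‖) ^ q) ∂μ := by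
    simp_rw [h2]
    rw [lintegral_const_mul' _ _ ENNReal.ofReal_ne_top]
  have h4 : ENNReal.ofReal (a ^ n) * (ENNReal.ofReal ((a ^ n)⁻¹) * ∫⁻ x, f x ∂μ)
      = ∫⁻ x, f x ∂μ := by
    rw [← mul_assoc, ← ENNReal.ofReal_mul han.le, mul_inv_cancel₀ han.ne',
      ENNReal.ofReal_one, one_mul]
  calc ∫⁻ x, f x ∂μ
      = ENNReal.ofReal (a ^ n) * (ENNReal.ofReal ((a ^ n)⁻¹) * ∫⁻ x, f x ∂μ) := h4.symm
    _ = ENNReal.ofReal (a ^ n) * ∫⁻ x, f (a • x) ∂μ := by rw [h1]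
    _ = ENNReal.ofReal (a ^ n) *
          (ENNReal.ofReal (a ^ q) * ∫⁻ x, ENNReal.ofReal ((1 + ‖x‖) ^ q) ∂μ) := by rw [h3]
    _ = ENNReal.ofReal (a ^ (q + n)) * ∫⁻ x, ENNReal.ofReal ((1 + ‖x‖) ^ q) ∂μ := by
        rw [← mul_assoc, ← ENNReal.ofReal_mul han.le]
        congr 2
        rw [Real.rpow_add ha, Real.rpow_natCast]
        ring

private theorem auxae_gauss (k' : ℕ) (i₀ : Fin k') :
    ∀ᵐ η' : EuclideanSpace ℝ (Fin k'), η' i₀ ≠ 0 := by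
  have hne : LinearMap.ker (EuclideanSpace.projₗ (𝕜 := ℝ) i₀) ≠ ⊤ := by
    intro h
    have h1 : (EuclideanSpace.single i₀ (1:ℝ)) ∈
        LinearMap.ker (EuclideanSpace.projₗ (𝕜 := ℝ) i₀) := by
      rw [h]; trivial
    rw [LinearMap.mem_ker] at h1
    simp [EuclideanSpace.projₗ] at h1
  have h := Measure.addHaar_submodule (volume : Measure (EuclideanSpace ℝ (Fin k')))
    (LinearMap.ker (EuclideanSpace.projₗ (𝕜 := ℝ) i₀)) hne
  rw [ae_iff]
  convert h using 2
  ext η'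
  simp [LinearMap.mem_ker, EuclideanSpace.projₗ]

theorem gaussian_tail_integral_bound
    (k k' : ℕ) (hk' : 0 < k') (hk'k : k' ≤ k)
    (𝔪 : ℝ) (h𝔪₁ : (k' : ℝ) - 1 < 𝔪) (h𝔪₂ : 𝔪 < (k' : ℝ)) :
    ∃ c : ℝ, 0 < c ∧ ∀ z : ℝ, 0 < z →
      (∫⁻ η' : EuclideanSpace ℝ (Fin k'),
        ∫⁻ η'' : EuclideanSpace ℝ (Fin (k - k')),
          ENNReal.ofReal (|η' ⟨0, hk'⟩| / z + ‖η''‖) ^ (𝔪 - (k : ℝ)) *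
            ENNReal.ofReal (Real.exp (-‖η'‖ ^ 2 / 2)))
        ≤ ENNReal.ofReal (c * z ^ ((k' : ℝ) - 𝔪)) := by
  set i₀ : Fin k' := ⟨0, hk'⟩
  set q : ℝ := 𝔪 - (k : ℝ) with hq
  set p : ℝ := 𝔪 - (k' : ℝ) with hpdef
  have hdk : ((k - k' : ℕ) : ℝ) = (k : ℝ) - (k' : ℝ) := by
    rw [Nat.cast_sub hk'k]
  have hqp : q + ((k - k' : ℕ) : ℝ) = p := by rw [hdk, hq, hpdef]; ring
  have hp1 : -1 < p := by rw [hpdef]; linarith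
  set C₀ : ℝ≥0∞ :=
    ∫⁻ ζ : EuclideanSpace ℝ (Fin (k - k')), ENNReal.ofReal ((1 + ‖ζ‖) ^ q) with hC₀def
  have hC₀ : C₀ < ∞ := by
    have hr : (Module.finrank ℝ (EuclideanSpace ℝ (Fin (k - k'))) : ℝ) < (k : ℝ) - 𝔪 := by
      rw [finrank_euclideanSpace_fin, hdk]; linarith
    have h := finite_integral_one_add_norm (E := EuclideanSpace ℝ (Fin (k - k'))) (μ := volume) hr
    rw [hC₀def]
    convert h using 4
    rw [hq]; ring
  set J : ℝ≥0∞ := ∫⁻ η' : EuclideanSpace ℝ (Fin k'),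
      ENNReal.ofReal (|η' i₀| ^ p) * ENNReal.ofReal (Real.exp (-‖η'‖ ^ 2 / 2)) with hJdef
  have hJ : J < ∞ := auxJ_gauss k' i₀ hp1
  refine ⟨(C₀ * J).toReal + 1, by positivity, fun z hz => ?_⟩
  have hImain : ∀ η' : EuclideanSpace ℝ (Fin k'), η' i₀ ≠ 0 →
      (∫⁻ η'' : EuclideanSpace ℝ (Fin (k - k')),
        ENNReal.ofReal (|η' i₀| / z + ‖η''‖) ^ q *
          ENNReal.ofReal (Real.exp (-‖η'‖ ^ 2 / 2)))
      = (ENNReal.ofReal (z ^ ((k' : ℝ) - 𝔪)) * C₀) *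
          (ENNReal.ofReal (|η' i₀| ^ p) * ENNReal.ofReal (Real.exp (-‖η'‖ ^ 2 / 2))) := by
    intro η' hη'
    have ha : 0 < |η' i₀| / z := div_pos (abs_pos.mpr hη') hz
    have step1 : (∫⁻ η'' : EuclideanSpace ℝ (Fin (k - k')),
        ENNReal.ofReal (|η' i₀| / z + ‖η''‖) ^ q *
          ENNReal.ofReal (Real.exp (-‖η'‖ ^ 2 / 2)))
        = (∫⁻ η'' : EuclideanSpace ℝ (Fin (k - k')),
            ENNReal.ofReal ((|η' i₀| / z + ‖η''‖) ^ q)) *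
          ENNReal.ofReal (Real.exp (-‖η'‖ ^ 2 / 2)) := by
      rw [← lintegral_mul_const' _ _ ENNReal.ofReal_ne_top]
      refine lintegral_congr fun η'' => ?_
      rw [ENNReal.ofReal_rpow_of_pos (by positivity)]
    rw [step1, auxScale_gauss (k - k') q _ ha, hqp]
    have hrw : (|η' i₀| / z) ^ p = |η' i₀| ^ p * z ^ ((k' : ℝ) - 𝔪) := by
      rw [div_eq_mul_inv, Real.mul_rpow (abs_nonneg _) (inv_nonneg.mpr hz.le),
        Real.inv_rpow hz.le]
      congr 1
      rw [← Real.rpow_neg hz.le]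
      congr 1
      rw [hpdef]; ring
    rw [hrw, ENNReal.ofReal_mul (by positivity)]
    ring
  have hcongr : (∫⁻ η' : EuclideanSpace ℝ (Fin k'),
      ∫⁻ η'' : EuclideanSpace ℝ (Fin (k - k')),
        ENNReal.ofReal (|η' i₀| / z + ‖η''‖) ^ q *
          ENNReal.ofReal (Real.exp (-‖η'‖ ^ 2 / 2)))
      = ∫⁻ η' : EuclideanSpace ℝ (Fin k'),
          (ENNReal.ofReal (z ^ ((k' : ℝ) - 𝔪)) * C₀) *
            (ENNReal.ofReal (|η' i₀| ^ p) * ENNReal.ofReal (Real.exp (-‖η'‖ ^ 2 / 2))) := by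
    refine lintegral_congr_ae ?_
    filter_upwards [auxae_gauss k' i₀] with η' hη'
    exact hImain η' hη'
  rw [hcongr, lintegral_const_mul' _ _
    (ENNReal.mul_ne_top ENNReal.ofReal_ne_top hC₀.ne), ← hJdef]
  have hfin : C₀ * J ≠ ∞ := ENNReal.mul_ne_top hC₀.ne hJ.ne
  calc ENNReal.ofReal (z ^ ((k' : ℝ) - 𝔪)) * C₀ * J
      = (C₀ * J) * ENNReal.ofReal (z ^ ((k' : ℝ) - 𝔪)) := by ring_nf
    _ ≤ ENNReal.ofReal ((C₀ * J).toReal + 1) * ENNReal.ofReal (z ^ ((k' : ℝ) - 𝔪)) := by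
        refine mul_le_mul_left ?_ _
        rw [← ENNReal.ofReal_toReal hfin]
        exact ENNReal.ofReal_le_ofReal (by
          rw [ENNReal.toReal_ofReal ENNReal.toReal_nonneg]
          linarith)
    _ = ENNReal.ofReal (((C₀ * J).toReal + 1) * z ^ ((k' : ℝ) - 𝔪)) := by
        rw [ENNReal.ofReal_mul (by positivity)]
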